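/- Let (A, B, R) be a VH-datum with parameters (m,n) and let M₁, M₂ be its transition matrices. Let C be the abelian group ℤ^R / K, where K is the subgroup of ℤ^R generated by the vectors δ_r − Σ_{s∈R} M_j(s,r)·δ_s for r ∈ R and j ∈ {1,2} (δ_r being the standard basis vector at r), and let e ∈ C be the class of Σ_{r∈R} δ_r. Set k = gcd(m−2, n−2). Then there exists a group homomorphism φ : C → ℤ/kℤ such that φ sends the class of δ_r to 1 for every r ∈ R, and φ(e) = 4 in ℤ/kℤ. -/

import Mathlib

/-- A VH-datum with parameters `(m,n)`: finite sets `A`, `B` of even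
cardinalities `m, n ≥ 4` with fixed-point-free involutions, together with a set
`R ⊆ A × B × B × A` satisfying the Burger–Mozes conditions (i)–(iii). -/
structure VHDatum (m n : ℕ) (A B : Type) [Fintype A] [Fintype B]
    [DecidableEq A] [DecidableEq B] where
  cardA : Fintype.card A = m
  cardB : Fintype.card B = n
  four_le_m : 4 ≤ m
  four_le_n : 4 ≤ n
  even_m : Even m
  even_n : Even n
  invA : A → A
  invB : B → B
  invA_invA : ∀ a, invA (invA a) = a
  invB_invB : ∀ b, invB (invB b) = b
  invA_ne : ∀ a, invA a ≠ a
  invB_ne : ∀ b, invB b ≠ b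
  R : Finset (A × B × B × A)
  cond_i : ∀ a b b' a', (a, b, b', a') ∈ R →
    (invA a, b', b, invA a') ∈ R ∧ (invA a', invB b', invB b, invA a) ∈ R ∧
    (a', invB b, invB b', a) ∈ R
  cond_ii : ∀ a b, (a, b, invB b, invA a) ∉ R
  cond_iii_ab : Set.BijOn (fun x : A × B × B × A => (x.1, x.2.1)) ↑R Set.univ
  cond_iii_ab' : Set.BijOn (fun x : A × B × B × A => (x.1, x.2.2.1)) ↑R Set.univ
  cond_iii_a'b : Set.BijOn (fun x : A × B × B × A => (x.2.2.2, x.2.1)) ↑R Set.univ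
  cond_iii_a'b' : Set.BijOn (fun x : A × B × B × A => (x.2.2.2, x.2.2.1)) ↑R Set.univ

variable {m n : ℕ} {A B : Type} [Fintype A] [Fintype B] [DecidableEq A] [DecidableEq B]

/-- The horizontal transition matrix `M₁`: for `r = (a,b,b′,a′)` and
`s = (c,d,d′,c′)` in `R`, `M₁(s,r) = 1` iff `d′ = b` and `c ≠ a⁻¹`. -/
def VHDatum.M1 (D : VHDatum m n A B) : Matrix D.R D.R ℤ := fun s r =>
  if (s : A × B × B × A).2.2.1 = (r : A × B × B × A).2.1 ∧
      (s : A × B × B × A).1 ≠ D.invA (r : A × B × B × A).1 then 1 else 0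

/-- The vertical transition matrix `M₂`: for `r = (a,b,b′,a′)` and
`s = (c,d,d′,c′)` in `R`, `M₂(s,r) = 1` iff `c = a′` and `d ≠ b⁻¹`. -/
def VHDatum.M2 (D : VHDatum m n A B) : Matrix D.R D.R ℤ := fun s r =>
  if (s : A × B × B × A).1 = (r : A × B × B × A).2.2.2 ∧
      (s : A × B × B × A).2.1 ≠ D.invB (r : A × B × B × A).2.1 then 1 else 0

/-- The subgroup `K ≤ ℤ^R` generated by the vectors
`δ_r − Σ_s M_j(s,r)·δ_s` for `r ∈ R`, `j = 1, 2`. -/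
def VHDatum.K (D : VHDatum m n A B) : AddSubgroup (D.R → ℤ) :=
  AddSubgroup.closure
    {v : D.R → ℤ | ∃ r : D.R,
      v = (fun s => (if s = r then 1 else 0) - D.M1 s r) ∨
      v = (fun s => (if s = r then 1 else 0) - D.M2 s r)}

private lemma sum_ite_ne {A : Type} [Fintype A] [DecidableEq A] (c : A) :
    ∑ x : A, (if x ≠ c then (1:ℤ) else 0) = Fintype.card A - 1 := by
  have h : ∀ x : A, (if x ≠ c then (1:ℤ) else 0) = 1 - (if x = c then 1 else 0) := by
    intro x; by_cases hx : x = c <;> simp [hx]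
  simp [h, Finset.sum_sub_distrib, Finset.sum_ite_eq', Finset.card_univ]

private lemma VHDatum.bij_ab' (D : VHDatum m n A B) :
    Function.Bijective (fun s : {x // x ∈ D.R} =>
      ((s : A × B × B × A).1, (s : A × B × B × A).2.2.1)) := by
  constructor
  · exact fun s t hst => Subtype.ext
      (D.cond_iii_ab'.injOn (Finset.mem_coe.mpr s.2) (Finset.mem_coe.mpr t.2) hst)
  · intro p
    obtain ⟨x, hx, hfx⟩ := D.cond_iii_ab'.surjOn (Set.mem_univ p)
    exact ⟨⟨x, Finset.mem_coe.mp hx⟩, hfx⟩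

private lemma VHDatum.bij_ab (D : VHDatum m n A B) :
    Function.Bijective (fun s : {x // x ∈ D.R} =>
      ((s : A × B × B × A).1, (s : A × B × B × A).2.1)) := by
  constructor
  · exact fun s t hst => Subtype.ext
      (D.cond_iii_ab.injOn (Finset.mem_coe.mpr s.2) (Finset.mem_coe.mpr t.2) hst)
  · intro p
    obtain ⟨x, hx, hfx⟩ := D.cond_iii_ab.surjOn (Set.mem_univ p)
    exact ⟨⟨x, Finset.mem_coe.mp hx⟩, hfx⟩

private lemma VHDatum.sum_M1 (D : VHDatum m n A B) (r : D.R) :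
    ∑ s : D.R, D.M1 s r = (m : ℤ) - 1 := by
  have h := Fintype.sum_bijective _ D.bij_ab' (fun s => D.M1 s r)
    (fun p : A × B => if p.2 = (r : A × B × B × A).2.1 ∧
      p.1 ≠ D.invA (r : A × B × B × A).1 then (1:ℤ) else 0) (fun s => rfl)
  rw [h, Fintype.sum_prod_type]
  have hx : ∀ x : A, (∑ y : B, if y = (r : A × B × B × A).2.1 ∧
      x ≠ D.invA (r : A × B × B × A).1 then (1:ℤ) else 0) =
      if x ≠ D.invA (r : A × B × B × A).1 then 1 else 0 := by
    intro x; simp [ite_and, Finset.sum_ite_eq']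
  rw [Finset.sum_congr rfl (fun x _ => hx x), sum_ite_ne, D.cardA]

private lemma VHDatum.sum_M2 (D : VHDatum m n A B) (r : D.R) :
    ∑ s : D.R, D.M2 s r = (n : ℤ) - 1 := by
  have h := Fintype.sum_bijective _ D.bij_ab (fun s => D.M2 s r)
    (fun p : A × B => if p.1 = (r : A × B × B × A).2.2.2 ∧
      p.2 ≠ D.invB (r : A × B × B × A).2.1 then (1:ℤ) else 0) (fun s => rfl)
  rw [h, Fintype.sum_prod_type]
  have hx : ∀ x : A, (∑ y : B, if x = (r : A × B × B × A).2.2.2 ∧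
      y ≠ D.invB (r : A × B × B × A).2.1 then (1:ℤ) else 0) =
      if x = (r : A × B × B × A).2.2.2 then (n : ℤ) - 1 else 0 := by
    intro x
    by_cases hxc : x = (r : A × B × B × A).2.2.2
    · simp only [hxc, true_and, if_true]
      rw [sum_ite_ne, D.cardB]
    · simp [hxc]
  rw [Finset.sum_congr rfl (fun x _ => hx x), Finset.sum_ite_eq']
  simp

private lemma VHDatum.card_R (D : VHDatum m n A B) :
    Fintype.card {x // x ∈ D.R} = m * n := by
  rw [Fintype.card_of_bijective D.bij_ab, Fintype.card_prod, D.cardA, D.cardB]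

/-- with `k = gcd(m−2, n−2)`, there is a homomorphism
`φ : C → ℤ/kℤ` sending the class of each `δ_r` to `1`; it sends the class `e`
of `Σ_r δ_r` to `4`. -/
theorem VHDatum.exists_hom_to_zmod (D : VHDatum m n A B) :
    ∃ φ : ((D.R → ℤ) ⧸ D.K) →+ ZMod (Nat.gcd (m - 2) (n - 2)),
      (∀ r : D.R,
        φ (QuotientAddGroup.mk (fun s => if s = r then (1 : ℤ) else 0)) = 1) ∧
      φ (QuotientAddGroup.mk (fun _ => (1 : ℤ))) = 4 := by
  set k := Nat.gcd (m - 2) (n - 2) with hk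
  have hzero : ∀ t : ℕ, k ∣ t → ((t : ℤ) : ZMod k) = 0 := by
    rintro t ⟨c, rfl⟩
    push_cast
    simp
  have hm0 : (((m - 2 : ℕ) : ℤ) : ZMod k) = 0 := hzero _ (Nat.gcd_dvd_left _ _)
  have hn0 : (((n - 2 : ℕ) : ℤ) : ZMod k) = 0 := hzero _ (Nat.gcd_dvd_right _ _)
  have hmc : ((m - 2 : ℕ) : ℤ) = (m : ℤ) - 2 := by
    have := D.four_le_m; omega
  have hnc : ((n - 2 : ℕ) : ℤ) = (n : ℤ) - 2 := by
    have := D.four_le_n; omega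
  have hm2 : ((m : ℕ) : ZMod k) = 2 := by
    have h : (((m : ℤ) - 2 : ℤ) : ZMod k) = 0 := by rw [← hmc]; exact hm0
    push_cast at h ⊢
    linear_combination h
  have hn2 : ((n : ℕ) : ZMod k) = 2 := by
    have h : (((n : ℤ) - 2 : ℤ) : ZMod k) = 0 := by rw [← hnc]; exact hn0
    push_cast at h ⊢
    linear_combination h
  -- the summing homomorphism
  let ψ : (D.R → ℤ) →+ ZMod k :=
    { toFun := fun v => ((∑ s : D.R, v s : ℤ) : ZMod k)
      map_zero' := by simp
      map_add' := fun v w => by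
        show ((∑ s : D.R, (v s + w s) : ℤ) : ZMod k) = _
        rw [Finset.sum_add_distrib]
        push_cast
        rfl }
  have hψδ : ∀ r : D.R, ψ (fun s => if s = r then (1 : ℤ) else 0) = 1 := by
    intro r
    show ((∑ s : D.R, if s = r then (1:ℤ) else 0 : ℤ) : ZMod k) = 1
    rw [Finset.sum_ite_eq']
    simp
  have hker : ∀ v ∈ D.K, ψ v = 0 := by
    intro v hv
    refine (AddSubgroup.closure_le ψ.ker).mpr ?_ hv
    rintro w ⟨r, rfl | rfl⟩ <;>
      simp only [AddMonoidHom.mem_ker, SetLike.mem_coe]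
    · show ((∑ s : D.R, ((if s = r then (1:ℤ) else 0) - D.M1 s r) : ℤ) : ZMod k) = 0
      rw [Finset.sum_sub_distrib, Finset.sum_ite_eq', D.sum_M1 r]
      push_cast
      rw [hm2]
      norm_num
    · show ((∑ s : D.R, ((if s = r then (1:ℤ) else 0) - D.M2 s r) : ℤ) : ZMod k) = 0
      rw [Finset.sum_sub_distrib, Finset.sum_ite_eq', D.sum_M2 r]
      push_cast
      rw [hn2]
      norm_num
  refine ⟨QuotientAddGroup.lift D.K ψ (fun v hv => AddMonoidHom.mem_ker.mpr (hker v hv)), fun r => ?_, ?_⟩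
  · rw [QuotientAddGroup.lift_mk]
    exact hψδ r
  · rw [QuotientAddGroup.lift_mk]
    show ((∑ _s : D.R, (1:ℤ) : ℤ) : ZMod k) = 4
    rw [Finset.sum_const, Finset.card_univ]
    show (((Fintype.card {x // x ∈ D.R} : ℤ) * 1 : ℤ) : ZMod k) = 4
    rw [D.card_R]
    push_cast
    rw [hm2, hn2]
    norm_num
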